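/- Let G be an oriented circular-arc catch digraph on n vertices that contains no directed cycle of length n. Then G contains a vertex of outdegree zero. -/

import Mathlib

/-- Membership in the closed clockwise circular arc starting at `a` of length `ℓ`
on a circle of circumference 1 (points are reals modulo 1). -/
def arcMem (a ℓ x : ℝ) : Prop := Int.fract (x - a) ≤ ℓ

/-- The set of points of the circle (reals, modulo 1) lying on the arc. -/
def arcSet (a ℓ : ℝ) : Set ℝ := {x | arcMem a ℓ x}

/-- `E` is a circular-arc catch digraph: each vertex `v` carries a circular arc
(start `a v`, length `ℓ v`) and a point `p v` inside its own arc, and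
`E u v` iff `u ≠ v` and the point of `v` lies in the arc of `u`. -/
def IsCACatchDigraph {V : Type*} (E : V → V → Prop) : Prop :=
  ∃ a ℓ p : V → ℝ, (∀ v, arcMem (a v) (ℓ v) (p v)) ∧
    ∀ u v, E u v ↔ u ≠ v ∧ arcMem (a u) (ℓ u) (p v)

/-- Proper circular-arc catch digraph: as above, with no arc properly contained
in another. -/
def IsProperCACatchDigraph {V : Type*} (E : V → V → Prop) : Prop :=
  ∃ a ℓ p : V → ℝ, (∀ v, arcMem (a v) (ℓ v) (p v)) ∧
    (∀ u v : V, ¬ arcSet (a u) (ℓ u) ⊂ arcSet (a v) (ℓ v)) ∧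
    ∀ u v, E u v ↔ u ≠ v ∧ arcMem (a u) (ℓ u) (p v)

/-- A digraph is oriented: no pair of vertices has edges in both directions. -/
def Oriented {V : Type*} (E : V → V → Prop) : Prop := ∀ u v, E u v → ¬ E v u

/-- A subset of `Fin n` is a circular (cyclically consecutive) block. -/
def CircBlock {n : ℕ} (S : Set (Fin n)) : Prop :=
  S = ∅ ∨ ∃ a b : Fin n, S = {i | i - a ≤ b - a}


private lemma fract_sub_fract' (x y : ℝ) :
    Int.fract (x - y) = Int.fract (Int.fract x - Int.fract y) := by
  rw [Int.fract_eq_fract]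
  refine ⟨⌊x⌋ - ⌊y⌋, ?_⟩
  unfold Int.fract
  push_cast
  ring

private lemma fract_add_fract' (x y : ℝ) :
    Int.fract (x + y) = Int.fract (Int.fract x + Int.fract y) := by
  rw [Int.fract_eq_fract]
  refine ⟨⌊x⌋ + ⌊y⌋, ?_⟩
  unfold Int.fract
  push_cast
  ring

open Fin.NatCast Fin.CommRing in
/-- an oriented circular-arc catch digraph on n vertices containing
no directed cycle of length n has a vertex of outdegree zero. -/
theorem stmt_1 {V : Type*} [Fintype V] (E : V → V → Prop)
    (hirr : ∀ v, ¬ E v v) (horient : Oriented E)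
    (hcatch : IsCACatchDigraph E)
    (hnocyc : ¬ ∃ c : Fin (Fintype.card V) ≃ V,
        ∀ i, E (c i) (c (finRotate (Fintype.card V) i))) :
    ∃ v : V, ∀ w : V, ¬ E v w := by
  classical
  obtain ⟨a, ℓ, p, hp, hE⟩ := hcatch
  by_contra hcon
  push_neg at hcon
  apply hnocyc
  -- fract ∘ p is injective
  have hinj : Function.Injective (fun v => Int.fract (p v)) := by
    intro u v huv
    simp only at huv
    by_contra hne
    have h1 : arcMem (a u) (ℓ u) (p v) := by
      unfold arcMem
      rw [fract_sub_fract' (p v), ← huv, ← fract_sub_fract']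
      exact hp u
    have h2 : arcMem (a v) (ℓ v) (p u) := by
      unfold arcMem
      rw [fract_sub_fract' (p u), huv, ← fract_sub_fract']
      exact hp v
    exact horient u v ((hE u v).2 ⟨hne, h1⟩) ((hE v u).2 ⟨Ne.symm hne, h2⟩)
  by_cases hV : Nonempty V
  swap
  · haveI : IsEmpty V := not_nonempty_iff.mp hV
    exact ⟨(Fintype.equivFin V).symm, fun i => (IsEmpty.false ((Fintype.equivFin V).symm i)).elim⟩
  obtain ⟨v0⟩ := hV
  obtain ⟨w0, hw0⟩ := hcon v0
  have hne0 : v0 ≠ w0 := by rintro rfl; exact hirr _ hw0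
  have hcard2 : 2 ≤ Fintype.card V := Fintype.one_lt_card_iff_nontrivial.mpr ⟨⟨v0, w0, hne0⟩⟩
  obtain ⟨m, hm⟩ : ∃ m, Fintype.card V = m + 2 := ⟨Fintype.card V - 2, by omega⟩
  rw [hm]
  -- sorted enumeration
  let e : Fin (m + 2) ≃ V := (finCongr hm.symm).trans (Fintype.equivFin V).symm
  let f : Fin (m + 2) → ℝ := fun i => Int.fract (p (e i))
  let c : Fin (m + 2) ≃ V := (Tuple.sort f).trans e
  let t : Fin (m + 2) → ℝ := fun i => Int.fract (p (c i))
  have hstrict : StrictMono t := by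
    have hmono : Monotone t := Tuple.monotone_sort f
    exact hmono.strictMono_of_injective (hinj.comp c.injective)
  have ht0 : ∀ i, 0 ≤ t i := fun i => Int.fract_nonneg _
  have ht1 : ∀ i, t i < 1 := fun i => Int.fract_lt_one _
  -- fract of differences of sorted values
  have hdle : ∀ i j : Fin (m + 2), i ≤ j → Int.fract (t j - t i) = t j - t i := by
    intro i j h
    exact Int.fract_eq_self.mpr ⟨by linarith [hstrict.monotone h], by linarith [ht1 j, ht0 i]⟩
  have hdgt : ∀ i j : Fin (m + 2), j < i → Int.fract (t j - t i) = t j - t i + 1 := by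
    intro i j h
    have h2 : Int.fract (t j - t i + 1) = t j - t i + 1 := by
      refine Int.fract_eq_self.mpr ⟨by linarith [ht0 j, ht1 i], by linarith [hstrict h]⟩
    rw [← Int.fract_add_one, h2]
  have hpt : ∀ i j : Fin (m + 2), Int.fract (p (c j) - p (c i)) = Int.fract (t j - t i) := by
    intro i j
    rw [fract_sub_fract' (p (c j)) (p (c i))]
  -- successor minimality
  have hsucc_min : ∀ i j : Fin (m + 2), j ≠ i →
      Int.fract (t (i + 1) - t i) ≤ Int.fract (t j - t i) := by
    intro i j hj
    by_cases hi : i = Fin.last (m + 1)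
    · have h0 : i + 1 = 0 := by
        apply Fin.ext
        rw [Fin.val_add_one]
        simp [hi]
      have hji : j < i := by
        rcases lt_or_eq_of_le (Fin.le_last j) with h | h
        · rwa [← hi] at h
        · exact absurd (h.trans hi.symm) hj
      have h0i : (0 : Fin (m + 2)) < i := by
        rw [hi]; exact Fin.pos_iff_ne_zero.mpr (by simp [Fin.ext_iff])
      rw [h0, hdgt i 0 h0i, hdgt i j hji]
      have := hstrict.monotone (Fin.zero_le j)
      linarith
    · have hval : ((i + 1 : Fin (m + 2)) : ℕ) = i.val + 1 := by
        rw [Fin.val_add_one]; simp [hi]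
      have hii1 : i < i + 1 := by rw [Fin.lt_iff_val_lt_val, hval]; omega
      rw [hdle i (i + 1) hii1.le]
      rcases lt_or_gt_of_ne hj with h | h
      · rw [hdgt i j h]
        have := ht1 (i + 1)
        have := ht0 j
        linarith
      · have h1j : i + 1 ≤ j := by
          rw [Fin.le_iff_val_le_val, hval]
          exact h
        rw [hdle i j (hii1.le.trans h1j)]
        have := hstrict.monotone h1j
        linarith
  -- predecessor minimality
  have hpred_min : ∀ i j : Fin (m + 2), j ≠ i →
      Int.fract (t i - t (i - 1)) ≤ Int.fract (t i - t j) := by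
    intro i j hj
    by_cases hi : i = 0
    · subst hi
      have hlast : (0 : Fin (m + 2)) - 1 = Fin.last (m + 1) := by
        apply Fin.ext
        rw [Fin.coe_sub_one]
        simp
      have hj0 : (0 : Fin (m + 2)) < j := Fin.pos_iff_ne_zero.mpr hj
      have hlt : (0 : Fin (m + 2)) < Fin.last (m + 1) := Fin.pos_iff_ne_zero.mpr (by simp [Fin.ext_iff])
      rw [hlast, hdgt (Fin.last (m + 1)) 0 hlt, hdgt j 0 hj0]
      have := hstrict.monotone (Fin.le_last j)
      linarith
    · have hval : ((i - 1 : Fin (m + 2)) : ℕ) = i.val - 1 := by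
        rw [Fin.coe_sub_one]; simp [hi]
      have hi0 : 0 < i.val := Fin.pos_iff_ne_zero.mpr hi
      have hii1 : i - 1 < i := by rw [Fin.lt_iff_val_lt_val, hval]; omega
      rw [hdle (i - 1) i hii1.le]
      rcases lt_or_gt_of_ne hj with h | h
      · have hji1 : j ≤ i - 1 := by
          rw [Fin.le_iff_val_le_val, hval]
          have := Fin.lt_iff_val_lt_val.mp h
          omega
        rw [hdle j i (hji1.trans hii1.le)]
        have := hstrict.monotone hji1
        linarith
      · rw [hdgt j i h]
        have := ht1 j
        have := ht0 (i - 1)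
        linarith
  -- key geometric lemma: a vertex with an out-neighbor catches a circular neighbor
  have hone : (1 : Fin (m + 2)) ≠ 0 := by simp [Fin.ext_iff]
  have hne_succ : ∀ i : Fin (m + 2), i + 1 ≠ i := by
    intro i h
    refine hone ?_
    calc (1 : Fin (m + 2)) = i + 1 - i := by ring
    _ = i - i := by rw [h]
    _ = 0 := by ring
  have hne_pred : ∀ i : Fin (m + 2), i - 1 ≠ i := by
    intro i h
    refine hone ?_
    calc (1 : Fin (m + 2)) = i - (i - 1) := by ring
    _ = i - i := by rw [h]
    _ = 0 := by ring
  have hkey : ∀ i : Fin (m + 2), E (c i) (c (i + 1)) ∨ E (c i) (c (i - 1)) := by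
    intro i
    obtain ⟨w, hw⟩ := hcon (c i)
    have hwne : w ≠ c i := by rintro rfl; exact hirr _ hw
    have hmem : arcMem (a (c i)) (ℓ (c i)) (p w) := ((hE _ _).1 hw).2
    have hsne : c i ≠ c (i + 1) := fun h => hne_succ i (c.injective h.symm)
    have hpne : c i ≠ c (i - 1) := fun h => hne_pred i (c.injective h.symm)
    by_cases hL : 1 ≤ ℓ (c i)
    · exact Or.inl ((hE _ _).2 ⟨hsne, le_trans (Int.fract_lt_one _).le hL⟩)
    push_neg at hL
    set j := c.symm w with hjdef
    have hcj : c j = w := c.apply_symm_apply w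
    have hji : j ≠ i := by
      intro h; rw [h] at hcj; exact hwne hcj.symm
    set tu := Int.fract (p (c i) - a (c i)) with htu
    have htuL : tu ≤ ℓ (c i) := hp (c i)
    set tw := Int.fract (p w - a (c i)) with htw
    have htwL : tw ≤ ℓ (c i) := hmem
    have htu0 : 0 ≤ tu := Int.fract_nonneg _
    have htu1 : tu < 1 := Int.fract_lt_one _
    by_cases hcase : tu ≤ tw
    · -- go clockwise
      left
      set dw := Int.fract (p w - p (c i)) with hdw
      have hdw1 : dw < 1 := Int.fract_lt_one _
      have hdw0 : 0 ≤ dw := Int.fract_nonneg _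
      have h1 : tw = Int.fract (dw + tu) := by
        rw [htw, hdw, htu, show p w - a (c i) = (p w - p (c i)) + (p (c i) - a (c i)) by ring]
        exact fract_add_fract' _ _
      have hsum : dw + tu < 1 := by
        by_contra hge
        push_neg at hge
        have h2 : Int.fract (dw + tu) = dw + tu - 1 := by
          rw [← Int.fract_sub_one]
          exact Int.fract_eq_self.mpr ⟨by linarith, by linarith⟩
        rw [h2] at h1
        linarith
      have h3 : tw = dw + tu := by
        rw [h1]
        exact Int.fract_eq_self.mpr ⟨by linarith, hsum⟩
      set dv := Int.fract (p (c (i + 1)) - p (c i)) with hdv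
      have hdvw : dv ≤ dw := by
        rw [hdv, hdw, ← hcj, hpt i (i + 1), hpt i j]
        exact hsucc_min i j hji
      have hdv0 : 0 ≤ dv := Int.fract_nonneg _
      have htv : Int.fract (p (c (i + 1)) - a (c i)) = dv + tu := by
        rw [show p (c (i + 1)) - a (c i) = (p (c (i + 1)) - p (c i)) + (p (c i) - a (c i)) by ring,
          fract_add_fract', ← hdv, ← htu]
        exact Int.fract_eq_self.mpr ⟨by linarith, by linarith⟩
      refine (hE _ _).2 ⟨hsne, ?_⟩
      unfold arcMem
      rw [htv]
      linarith
    · -- go counterclockwise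
      right
      push_neg at hcase
      set ew := Int.fract (p (c i) - p w) with hew
      have hew1 : ew < 1 := Int.fract_lt_one _
      have hew0 : 0 ≤ ew := Int.fract_nonneg _
      have h1 : tw = Int.fract (tu - ew) := by
        rw [htw, hew, htu, show p w - a (c i) = (p (c i) - a (c i)) - (p (c i) - p w) by ring]
        exact fract_sub_fract' _ _
      have hewtu : ew ≤ tu := by
        by_contra hgt
        push_neg at hgt
        have h2 : Int.fract (tu - ew) = tu - ew + 1 := by
          rw [← Int.fract_add_one]
          exact Int.fract_eq_self.mpr ⟨by linarith, by linarith⟩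
        rw [h2] at h1
        linarith
      set ev := Int.fract (p (c i) - p (c (i - 1))) with hev
      have hevw : ev ≤ ew := by
        rw [hev, hew, ← hcj, hpt (i - 1) i, hpt j i]
        exact hpred_min i j hji
      have hev0 : 0 ≤ ev := Int.fract_nonneg _
      have htv : Int.fract (p (c (i - 1)) - a (c i)) = tu - ev := by
        rw [show p (c (i - 1)) - a (c i) = (p (c i) - a (c i)) - (p (c i) - p (c (i - 1))) by ring,
          fract_sub_fract', ← hev, ← htu]
        exact Int.fract_eq_self.mpr ⟨by linarith, by linarith⟩
      refine (hE _ _).2 ⟨hpne, ?_⟩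
      unfold arcMem
      rw [htv]
      linarith
  -- propagation: either all clockwise edges or all counterclockwise edges
  by_cases hr : ∀ i : Fin (m + 2), E (c i) (c (i + 1))
  · exact ⟨c, fun i => by rw [finRotate_succ_apply]; exact hr i⟩
  · push_neg at hr
    obtain ⟨k, hk⟩ := hr
    have hall : ∀ s : ℕ, E (c (k - (s : Fin (m + 2)))) (c (k - (s : Fin (m + 2)) - 1)) := by
      intro s
      induction s with
      | zero =>
        simpa using (hkey k).resolve_left hk
      | succ s ih =>
        have hnr : ¬ E (c (k - (s : Fin (m + 2)) - 1)) (c (k - (s : Fin (m + 2)) - 1 + 1)) := by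
          rw [show k - (s : Fin (m + 2)) - 1 + 1 = k - (s : Fin (m + 2)) by ring]
          intro h
          exact horient _ _ ih h
        have h2 := (hkey (k - (s : Fin (m + 2)) - 1)).resolve_left hnr
        have hcast : (((s : ℕ) + 1 : ℕ) : Fin (m + 2)) = (s : Fin (m + 2)) + 1 := by
          push_cast; ring
        rw [hcast, show k - ((s : Fin (m + 2)) + 1) = k - (s : Fin (m + 2)) - 1 by ring]
        exact h2
    have hl : ∀ j : Fin (m + 2), E (c j) (c (j - 1)) := by
      intro j
      have := hall ((k - j : Fin (m + 2))).val
      rwa [Fin.cast_val_eq_self, sub_sub_cancel] at this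
    refine ⟨(Equiv.neg (Fin (m + 2))).trans c, fun i => ?_⟩
    rw [finRotate_succ_apply]
    simp only [Equiv.trans_apply, Equiv.neg_apply]
    rw [show -(i + 1) = -i - 1 by ring]
    exact hl (-i)
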